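/- Let A be a finite-dimensional commutative associative unital algebra over ℝ, equipped with a complete algebra norm, which admits a multiplicative basis (the product of any two basis elements is a real scalar multiple of a basis element), and suppose that for every maximal ideal m of A the quotient A/m is one-dimensional as an ℝ-vector space (i.e., every residue field is ℝ, so A has no complex factor). Then the exponential function exp : A → A is injective; consequently A has a unique logarithm defined on all of Ld(A). -/

import Mathlib

open scoped Nat


open NormedSpace

section Aux

variable (A : Type*) [NormedCommRing A] [NormedAlgebra ℝ A] [CompleteSpace A]
    [FiniteDimensional ℝ A]

/-- If all residue fields are `ℝ` and `exp z = 1`, then `z` is nilpotent. -/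
lemma stmt14_nilpotent
    (hres : ∀ m : Ideal A, m.IsMaximal → Module.finrank ℝ (A ⧸ m) = 1)
    {z : A} (hz : exp z = 1) : IsNilpotent z := by
  have hart : IsArtinianRing A := IsArtinianRing.of_finite ℝ A
  rw [nilpotent_iff_mem_prime]
  intro J hJ
  have hJm : J.IsMaximal := IsArtinianRing.isMaximal_of_isPrime J
  have hnt : Nontrivial (A ⧸ J) := Ideal.Quotient.nontrivial_iff.mpr hJm.ne_top
  -- `algebraMap ℝ (A ⧸ J)` is bijective
  have hbt : (⊥ : Subalgebra ℝ (A ⧸ J)) = ⊤ :=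
    Subalgebra.bot_eq_top_of_finrank_eq_one (hres J hJm)
  have hsurj : Function.Surjective (algebraMap ℝ (A ⧸ J)) := by
    intro x
    have hx : x ∈ (⊥ : Subalgebra ℝ (A ⧸ J)) := hbt ▸ Algebra.mem_top
    exact Algebra.mem_bot.mp hx
  have hinj : Function.Injective (algebraMap ℝ (A ⧸ J)) :=
    (algebraMap ℝ (A ⧸ J)).injective
  let e : ℝ ≃ₐ[ℝ] (A ⧸ J) := AlgEquiv.ofBijective (Algebra.ofId ℝ (A ⧸ J)) ⟨hinj, hsurj⟩
  let χ : A →ₐ[ℝ] ℝ := (e.symm : (A ⧸ J) →ₐ[ℝ] ℝ).comp (Ideal.Quotient.mkₐ ℝ J)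
  have hχc : Continuous χ := χ.toLinearMap.continuous_of_finiteDimensional
  letI : NormedAlgebra ℚ A := NormedAlgebra.restrictScalars ℚ ℝ A
  have hmap : χ (exp z) = exp (χ z) := map_exp χ hχc z
  rw [hz, map_one] at hmap
  have hz0 : χ z = 0 := by
    have h1 : Real.exp (χ z) = Real.exp 0 := by
      rw [Real.exp_eq_exp_ℝ, exp_zero]
      exact hmap.symm
    simpa using Real.exp_injective h1
  have : e.symm (Ideal.Quotient.mk J z) = 0 := hz0
  have hmk : Ideal.Quotient.mk J z = 0 := by
    have := congrArg e this
    simpa using this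
  exact Ideal.Quotient.eq_zero_iff_mem.mp hmk

/-- For `z` with `exp z = 1`, powers can be killed one at a time. -/
lemma stmt14_pow_step {A : Type*} [NormedCommRing A] [NormedAlgebra ℝ A] [CompleteSpace A]
    {z : A} (hz : exp z = 1) (k : ℕ) (h : z ^ (k + 2) = 0) : z ^ (k + 1) = 0 := by
  have hs : Summable fun j : ℕ => (j !⁻¹ : ℝ) • z ^ j := expSeries_summable' z
  have hmul : z ^ k * exp z = ∑' j : ℕ, z ^ k * ((j !⁻¹ : ℝ) • z ^ j) := by
    rw [exp_eq_tsum ℝ]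
    exact (hs.tsum_mul_left _).symm
  have hterm : ∀ j : ℕ, z ^ k * ((j !⁻¹ : ℝ) • z ^ j) = (j !⁻¹ : ℝ) • z ^ (k + j) := by
    intro j
    rw [mul_smul_comm, ← pow_add]
  have hvanish : ∀ j ∉ ({0, 1} : Finset ℕ), (j !⁻¹ : ℝ) • z ^ (k + j) = 0 := by
    intro j hj
    have hj2 : 2 ≤ j := by
      simp only [Finset.mem_insert, Finset.mem_singleton] at hj
      omega
    have : z ^ (k + j) = 0 := by
      have : k + j = (k + 2) + (j - 2) := by omega
      rw [this, pow_add, h, zero_mul]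
    rw [this, smul_zero]
  have htsum : (∑' j : ℕ, (j !⁻¹ : ℝ) • z ^ (k + j)) = z ^ k + z ^ (k + 1) := by
    rw [tsum_eq_sum hvanish]
    simp [Finset.sum_insert, Finset.sum_singleton]
  have : z ^ k * exp z = z ^ k + z ^ (k + 1) := by
    rw [hmul]
    simp_rw [hterm]
    exact htsum
  rw [hz, mul_one] at this
  exact (left_eq_add.mp this)

lemma stmt14_exp_one {A : Type*} [NormedCommRing A] [NormedAlgebra ℝ A] [CompleteSpace A]
    {z : A} (hz : exp z = 1) {N : ℕ} (hN : z ^ (N + 1) = 0) : z = 0 := by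
  induction N with
  | zero => simpa using hN
  | succ k ih => exact ih (stmt14_pow_step hz k hN)

end Aux

/-- On a finite-dimensional commutative associative unital `ℝ`-algebra with a
complete algebra norm which admits a multiplicative basis and all of whose residue fields are
`ℝ` (a multiplicative type-R algebra), the exponential function is injective; consequently
there is a unique logarithm defined on all of `Ld(A) = range exp`. -/
theorem stmt14 (A : Type*) [NormedCommRing A] [NormedAlgebra ℝ A] [CompleteSpace A]
    [FiniteDimensional ℝ A]
    (n : ℕ) (β : Module.Basis (Fin n) ℝ A)
    (hmul : ∀ i j, ∃ (c : ℝ) (k : Fin n), β i * β j = c • β k)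
    (hres : ∀ m : Ideal A, m.IsMaximal → Module.finrank ℝ (A ⧸ m) = 1) :
    Function.Injective (exp : A → A) ∧
      ∃! L : Set.range (exp : A → A) → A, ∀ y : Set.range (exp : A → A), exp (L y) = y := by
  have hker : ∀ z : A, exp z = 1 → z = 0 := by
    intro z hz
    obtain ⟨N, hN⟩ := stmt14_nilpotent A hres hz
    cases N with
    | zero =>
      -- z ^ 0 = 0 means 1 = 0, so A is trivial
      have h10 : (1 : A) = 0 := by simpa using hN
      calc z = z * 1 := (mul_one z).symm
        _ = 0 := by rw [h10, mul_zero]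
    | succ k => exact stmt14_exp_one hz hN
  have hinj : Function.Injective (exp : A → A) := by
    letI : NormedAlgebra ℚ A := NormedAlgebra.restrictScalars ℚ ℝ A
    intro x y hxy
    have h1 : exp (x - y) = 1 := by
      have : exp (x - y) * exp y = exp x := by
        rw [← exp_add, sub_add_cancel]
      rw [hxy] at this
      have hu : IsUnit (exp y) := isUnit_exp y
      exact hu.mul_right_cancel (by rw [this, one_mul])
    have := hker _ h1
    exact sub_eq_zero.mp this
  refine ⟨hinj, ?_⟩
  refine ⟨fun y => Classical.choose y.2, fun y => Classical.choose_spec y.2, ?_⟩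
  intro L' hL'
  funext y
  exact hinj (by rw [hL' y, Classical.choose_spec y.2])
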